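/- For every positive integer w there exists a real polynomial p of degree O(w^{1/3}) such that |p(1/k)| ≤ 1 for all integers k ∈ {1, …, 2w}, p(1/w) ≤ 1/3, and p(1/(2w)) ≥ 2/3. -/

import Mathlib

set_option maxHeartbeats 1000000
open Polynomial Finset Real
lemma chebT_natDegree_le (n : ℕ) : (Polynomial.Chebyshev.T ℝ n).natDegree ≤ n := by
  induction n using Nat.strong_induction_on with
  | _ n ih =>
    match n with
    | 0 => simp [Polynomial.Chebyshev.T_zero]
    | 1 => simp [Polynomial.Chebyshev.T_one]
    | (k+2) =>
      have h : ((k:ℤ) + 2) = ((k+2 : ℕ) : ℤ) := by push_cast; ring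
      have := Polynomial.Chebyshev.T_add_two ℝ (k : ℤ)
      rw [h] at this
      rw [this]
      refine le_trans (Polynomial.natDegree_sub_le _ _) ?_
      have h1 : ((k:ℤ) + 1) = ((k+1 : ℕ) : ℤ) := by push_cast; ring
      rw [h1]
      have a1 := ih (k+1) (by omega)
      have a2 := ih k (by omega)
      have b1 : (2 * X * Polynomial.Chebyshev.T ℝ (k+1:ℕ)).natDegree ≤ k + 2 := by
        refine le_trans (Polynomial.natDegree_mul_le) ?_
        have : (2 * X : ℝ[X]).natDegree ≤ 1 := by
          refine le_trans (Polynomial.natDegree_mul_le) ?_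
          simp
        omega
      simp only [max_le_iff]
      exact ⟨b1, by omega⟩

lemma chebT_abs_le (n : ℤ) (y : ℝ) (hy : y ∈ Set.Icc (-1:ℝ) 1) :
    |(Polynomial.Chebyshev.T ℝ n).eval y| ≤ 1 := by
  have h1 : Real.cos (Real.arccos y) = y := Real.cos_arccos hy.1 hy.2
  rw [← h1, Polynomial.Chebyshev.T_real_cos]
  exact Real.abs_cos_le_one _

lemma chebT_eval_one (n : ℤ) : (Polynomial.Chebyshev.T ℝ n).eval 1 = 1 := by
  have := Polynomial.Chebyshev.T_real_cos (0:ℝ) n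
  simpa using this


noncomputable def uPoly (n : ℕ) : Polynomial ℝ := ∏ k ∈ Finset.Icc 1 n, (1 - Polynomial.C (k:ℝ) * Polynomial.X)

lemma uPoly_eval (n : ℕ) (x : ℝ) : (uPoly n).eval x = ∏ k ∈ Finset.Icc 1 n, (1 - (k:ℝ) * x) := by
  simp [uPoly, Polynomial.eval_prod]

lemma uPoly_natDegree_le (n : ℕ) : (uPoly n).natDegree ≤ n := by
  refine le_trans (Polynomial.natDegree_prod_le _ _) ?_
  refine le_trans (Finset.sum_le_card_nsmul _ _ 1 ?_) (by simp)
  intro k _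
  refine le_trans (Polynomial.natDegree_sub_le _ _) ?_
  simp [Polynomial.natDegree_C_mul_le]
  exact le_trans (Polynomial.natDegree_C_mul_le _ _) (by simp)

lemma uPoly_eval_root (n k : ℕ) (hk : 1 ≤ k) (hkn : k ≤ n) : (uPoly n).eval (1/(k:ℝ)) = 0 := by
  rw [uPoly_eval]
  refine Finset.prod_eq_zero (Finset.mem_Icc.mpr ⟨hk, hkn⟩) ?_
  have : (k:ℝ) ≠ 0 := Nat.cast_ne_zero.mpr (by omega)
  field_simp
  norm_num

lemma uPoly_eval_mem (n : ℕ) (x : ℝ) (hx : 0 ≤ x) (hx2 : (n:ℝ) * x ≤ 1) :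
    (uPoly n).eval x ∈ Set.Icc (0:ℝ) 1 := by
  rw [uPoly_eval]
  constructor
  · refine Finset.prod_nonneg fun k hk => ?_
    have hk' := Finset.mem_Icc.mp hk
    have : (k:ℝ) * x ≤ (n:ℝ) * x := by
      apply mul_le_mul_of_nonneg_right _ hx
      exact_mod_cast hk'.2
    linarith
  · refine Finset.prod_le_one (fun k hk => ?_) (fun k hk => ?_)
    · have hk' := Finset.mem_Icc.mp hk
      have : (k:ℝ) * x ≤ (n:ℝ) * x := by
        apply mul_le_mul_of_nonneg_right _ hx
        exact_mod_cast hk'.2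
      linarith
    · have : 0 ≤ (k:ℝ) * x := by positivity
      linarith

lemma small_case (w : ℕ) (hw : 0 < w) : ∃ p : Polynomial ℝ, p.natDegree ≤ 2*w ∧
    (∀ k : ℕ, 1 ≤ k → k ≤ 2 * w → |p.eval (1 / (k : ℝ))| ≤ 1) ∧
    p.eval (1 / (w : ℝ)) ≤ 1 / 3 ∧ 2 / 3 ≤ p.eval (1 / (2 * w : ℝ)) := by
  set n := 2*w - 1 with hn
  have hcast : ((2*w : ℕ) : ℝ) = 2 * (w:ℝ) := by push_cast; ring
  have hd : 0 < (uPoly n).eval (1/(2*(w:ℝ))) := by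
    rw [uPoly_eval]
    refine Finset.prod_pos fun k hk => ?_
    have hk' := Finset.mem_Icc.mp hk
    have h1 : (k:ℝ) ≤ 2*(w:ℝ) - 1 := by
      have : (k:ℕ) ≤ 2*w - 1 := hk'.2
      have : ((k:ℕ):ℝ) ≤ ((2*w - 1 : ℕ):ℝ) := by exact_mod_cast this
      have h2 : ((2*w - 1 : ℕ):ℝ) = 2*(w:ℝ) - 1 := by
        push_cast [Nat.cast_sub (by omega : 1 ≤ 2*w)]; ring
      linarith
    have hw' : (0:ℝ) < 2*(w:ℝ) := by positivity
    have : (k:ℝ) * (1/(2*(w:ℝ))) < 1 := by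
      rw [mul_one_div, div_lt_one hw']; linarith
    linarith
  set d := (uPoly n).eval (1/(2*(w:ℝ))) with hdd
  refine ⟨Polynomial.C d⁻¹ * uPoly n, ?_, ?_, ?_, ?_⟩
  · refine le_trans (Polynomial.natDegree_mul_le) ?_
    have := uPoly_natDegree_le n
    simp only [Polynomial.natDegree_C]
    omega
  · intro k hk1 hk2
    rcases lt_or_eq_of_le hk2 with h | h
    · have h0 : (uPoly n).eval (1/(k:ℝ)) = 0 := uPoly_eval_root n k hk1 (by omega)
      rw [one_div] at h0
      simp [h0]
    · subst h
      rw [hcast]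
      simp only [Polynomial.eval_mul, Polynomial.eval_C, ← hdd]
      rw [inv_mul_cancel₀ (ne_of_gt hd)]
      norm_num
  · have h0 : (uPoly n).eval (1/(w:ℝ)) = 0 := uPoly_eval_root n w hw (by omega)
    rw [one_div] at h0
    simp [h0]
  · simp only [Polynomial.eval_mul, Polynomial.eval_C]
    have : (1 / (2 * (w:ℝ))) = 1/(2*(w:ℝ)) := rfl
    rw [show (2 * (w:ℕ) : ℝ) = 2*(w:ℝ) by push_cast; ring] at *
    rw [← hdd, inv_mul_cancel₀ (ne_of_gt hd)]
    norm_num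

lemma large_case (w : ℕ) (hw : 10^6 ≤ w) : ∃ p : Polynomial ℝ,
    (p.natDegree : ℝ) ≤ 7 * (w : ℝ) ^ ((1 : ℝ) / 3) ∧
    (∀ k : ℕ, 1 ≤ k → k ≤ 2 * w → |p.eval (1 / (k : ℝ))| ≤ 1) ∧
    p.eval (1 / (w : ℝ)) ≤ 1 / 3 ∧
    2 / 3 ≤ p.eval (1 / (2 * w : ℝ)) := by
  have hwR : (10^6 : ℝ) ≤ (w:ℝ) := by exact_mod_cast hw
  have hwpos : (0:ℝ) < w := by linarith
  -- the cube-root scale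
  obtain ⟨t, ht3, ht170⟩ : ∃ t : ℝ, t^3 = 5*(w:ℝ) ∧ (170:ℝ) ≤ t := by
    refine ⟨(5*(w:ℝ)) ^ ((1:ℝ)/3), ?_, ?_⟩
    · rw [← Real.rpow_natCast ((5*(w:ℝ)) ^ ((1:ℝ)/3)) 3, ← Real.rpow_mul (by linarith)]
      norm_num
    · have h0 : (0:ℝ) ≤ (5*(w:ℝ)) ^ ((1:ℝ)/3) := Real.rpow_nonneg (by linarith) _
      by_contra h
      push_neg at h
      have h2 : ((5*(w:ℝ)) ^ ((1:ℝ)/3))^3 < 170^3 := by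
        apply pow_lt_pow_left₀ h h0
        norm_num
      rw [← Real.rpow_natCast ((5*(w:ℝ)) ^ ((1:ℝ)/3)) 3, ← Real.rpow_mul (by linarith)] at h2
      norm_num at h2
      linarith
  have ht0 : (0:ℝ) ≤ t := by linarith
  obtain ⟨m, hMt, hMt2⟩ : ∃ m : ℕ, t ≤ (m:ℝ) ∧ (m:ℝ) ≤ t + 1 :=
    ⟨⌈t⌉₊, Nat.le_ceil t, le_of_lt (Nat.ceil_lt_add_one ht0)⟩
  obtain ⟨M, hM⟩ : ∃ M : ℝ, M = (m:ℝ) := ⟨_, rfl⟩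
  rw [← hM] at hMt hMt2
  have hM170 : (170:ℝ) ≤ M := le_trans ht170 hMt
  have hMpos : (0:ℝ) < M := by linarith
  have hM1 : 5*(w:ℝ) ≤ M^3 := by
    rw [← ht3]; exact pow_le_pow_left₀ ht0 hMt 3
  have haux1 : 170*t^2 ≤ t^3 := by
    have h := mul_nonneg (sub_nonneg.mpr ht170) (sq_nonneg t)
    linarith only [h]
  have haux2 : 170*t ≤ t^2 := by
    have h := mul_nonneg (sub_nonneg.mpr ht170) ht0
    linarith only [h]
  have haux3 : 28900*t ≤ t^3 := by linarith
  have hM2 : M^3 ≤ (26/5)*(w:ℝ) := by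
    have e1 : M^3 ≤ (t+1)^3 := pow_le_pow_left₀ (by linarith) hMt2 3
    have e2 : (t+1)^3 = t^3 + 3*t^2 + 3*t + 1 := by ring
    have e3 : M^3 ≤ t^3 + 3*t^2 + 3*t + 1 := by rw [← e2]; exact e1
    linarith
  have hMw2 : M ≤ (w:ℝ)/2 := by linarith
  have hmpos : 1 ≤ m := by
    have h1 : (1:ℝ) ≤ (m:ℝ) := by rw [← hM]; linarith
    exact_mod_cast h1
  have hden : (0:ℝ) < 2*(w:ℝ) - M := by linarith
  -- scaled variable
  obtain ⟨i, hi⟩ : ∃ i : ℝ, i = 1/M := ⟨_, rfl⟩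
  have hipos : 0 < i := by rw [hi]; positivity
  have hiM : i * M = 1 := by rw [hi]; field_simp
  have hi170 : i ≤ 1/170 := by
    rw [hi, div_le_div_iff₀ hMpos (by norm_num)]
    linarith
  have hi2 : i^2 ≤ (1/170)^2 := by
    have h := mul_nonneg (sub_nonneg.mpr hi170) (by linarith : (0:ℝ) ≤ 1/170 + i)
    linarith only [h]
  have hi4 : i^4 ≤ i^2 * (1/170)^2 := by
    have h := mul_nonneg (sq_nonneg i) (sub_nonneg.mpr hi2)
    linarith only [h]
  -- delta
  obtain ⟨δ, hδ⟩ : ∃ δ : ℝ, δ = 2*M/(2*(w:ℝ) - M) := ⟨_, rfl⟩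
  have hδpos : 0 < δ := by rw [hδ]; exact div_pos (by linarith) hden
  have hδl : 5*i^2 ≤ δ := by
    rw [hδ, hi, div_pow, one_pow, mul_one_div, div_le_div_iff₀ (pow_pos hMpos 2) hden]
    linarith only [hM1, hMpos.le]
  have hδu : δ ≤ 7*i^2 := by
    rw [hδ, hi, div_pow, one_pow, mul_one_div, div_le_div_iff₀ hden (pow_pos hMpos 2)]
    have e : M^2*M = M^3 := by ring
    nlinarith [hM2, hMw2, e]
  have hδsmall : δ ≤ 1/2 := by linarith only [hδu, hi2]
  -- pi bounds
  have hπu : Real.pi < 3.15 := Real.pi_lt_d2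
  have hπl : 3.14 < Real.pi := Real.pi_gt_d2
  have hπ2u : Real.pi^2 ≤ 9.9225 := by
    have h := mul_le_mul hπu.le hπu.le Real.pi_pos.le (by norm_num : (0:ℝ) ≤ 3.15)
    linarith only [h]
  have hπ2l : 9.8596 ≤ Real.pi^2 := by
    have h := mul_le_mul hπl.le hπl.le (by norm_num : (0:ℝ) ≤ 3.14) Real.pi_pos.le
    linarith only [h]
  have hπ4u : Real.pi^4 ≤ 98.46 := by
    have h := mul_le_mul hπ2u hπ2u (sq_nonneg Real.pi) (by norm_num : (0:ℝ) ≤ 9.9225)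
    linarith only [h]
  -- products of atoms
  have c1 : Real.pi^2 * i^2 ≤ 9.9225 * i^2 := mul_le_mul_of_nonneg_right hπ2u (sq_nonneg i)
  have c1' : 9.8596 * i^2 ≤ Real.pi^2 * i^2 := mul_le_mul_of_nonneg_right hπ2l (sq_nonneg i)
  have hi4nn : (0:ℝ) ≤ i^4 := by positivity
  have c2 : Real.pi^4 * i^4 ≤ 98.46 * i^4 := mul_le_mul_of_nonneg_right hπ4u hi4nn
  have c2' : (0:ℝ) ≤ Real.pi^4 * i^4 := by positivity
  have hπi : Real.pi * i ≤ 3.15 * (1/170) :=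
    mul_le_mul hπu.le hi170 hipos.le (by norm_num)
  -- angles
  obtain ⟨x, hx⟩ : ∃ x : ℝ, x = (Real.pi/2) * i := ⟨_, rfl⟩
  obtain ⟨y, hy⟩ : ∃ y : ℝ, y = (3*Real.pi/2) * i := ⟨_, rfl⟩
  have hx0 : 0 ≤ x := by rw [hx]; positivity
  have hy0 : 0 ≤ y := by rw [hy]; positivity
  have hxle : x ≤ 1 := by rw [hx]; linarith
  have hyle : y ≤ 1 := by rw [hy]; linarith
  -- Step B : 1 - δ ≤ cos x
  have hstepB : 1 - δ ≤ Real.cos x := by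
    have hcb := Real.cos_bound (x := x) (by rw [abs_of_nonneg hx0]; exact hxle)
    rw [abs_of_nonneg hx0] at hcb
    have h1 := (abs_le.mp hcb).1
    have hkey : x^2/2 + x^4*(5/96) ≤ δ := by
      have hx2 : x^2 = (Real.pi^2 * i^2)/4 := by rw [hx]; ring
      have hx4 : x^4 = (Real.pi^4 * i^4)/16 := by rw [hx]; ring
      rw [hx2, hx4]
      linarith only [hδl, c1, c2, hi4, sq_nonneg i]
    linarith
  -- Step C : cos y ≤ 1 - δ
  have hstepC : Real.cos y ≤ 1 - δ := by
    have hcb := Real.cos_bound (x := y) (by rw [abs_of_nonneg hy0]; exact hyle)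
    rw [abs_of_nonneg hy0] at hcb
    have h1 := (abs_le.mp hcb).2
    have hkey : δ ≤ y^2/2 - y^4*(5/96) := by
      have hy2 : y^2 = 9*(Real.pi^2 * i^2)/4 := by rw [hy]; ring
      have hy4 : y^4 = 81*(Real.pi^4 * i^4)/16 := by rw [hy]; ring
      rw [hy2, hy4]
      linarith only [hδu, c1', c2, hi4, sq_nonneg i]
    linarith
  -- theta
  obtain ⟨θ, hθdef⟩ : ∃ θ : ℝ, θ = Real.arccos (1 - δ) := ⟨_, rfl⟩
  have hθcos : Real.cos θ = 1 - δ := by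
    rw [hθdef]; exact Real.cos_arccos (by linarith) (by linarith)
  have hθ0 : 0 ≤ θ := by rw [hθdef]; exact Real.arccos_nonneg _
  have hθπ : θ ≤ Real.pi := by rw [hθdef]; exact Real.arccos_le_pi _
  have hθlb : x ≤ θ := by
    by_contra h
    push_neg at h
    have := Real.strictAntiOn_cos ⟨hθ0, hθπ⟩ ⟨hx0, by linarith [Real.pi_gt_three]⟩ h
    rw [hθcos] at this
    linarith
  have hθub : θ ≤ y := by
    by_contra h
    push_neg at h
    have := Real.strictAntiOn_cos ⟨hy0, by linarith [Real.pi_gt_three]⟩ ⟨hθ0, hθπ⟩ h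
    rw [hθcos] at this
    linarith
  have hMx : M * x = Real.pi/2 := by
    rw [hx]
    calc M * (Real.pi/2 * i) = (Real.pi/2) * (i*M) := by ring
      _ = Real.pi/2 := by rw [hiM]; ring
  have hMy : M * y = Real.pi + Real.pi/2 := by
    rw [hy]
    calc M * (3*Real.pi/2 * i) = (3*Real.pi/2) * (i*M) := by ring
      _ = Real.pi + Real.pi/2 := by rw [hiM]; ring
  have hcosm : Real.cos (M*θ) ≤ 0 := by
    apply Real.cos_nonpos_of_pi_div_two_le_of_le
    · rw [← hMx]; exact mul_le_mul_of_nonneg_left hθlb (le_of_lt hMpos)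
    · rw [← hMy]; exact mul_le_mul_of_nonneg_left hθub (le_of_lt hMpos)
  -- polynomial pieces
  obtain ⟨sP, hsP⟩ : ∃ sP : ℝ, sP = 1/(2*(w:ℝ)) := ⟨_, rfl⟩
  have hsPpos : 0 < sP := by rw [hsP]; positivity
  have hesP : 0 < i - sP := by
    rw [hi, hsP, sub_pos, div_lt_div_iff₀ (by positivity) hMpos]
    linarith
  have hne : i - sP ≠ 0 := ne_of_gt hesP
  obtain ⟨a, ha⟩ : ∃ a : ℝ, a = (i+sP)/(i-sP) := ⟨_, rfl⟩
  obtain ⟨b, hb⟩ : ∃ b : ℝ, b = -2/(i-sP) := ⟨_, rfl⟩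
  set L : Polynomial ℝ := Polynomial.C a + Polynomial.C b * Polynomial.X with hL
  have hLform : ∀ z : ℝ, L.eval z = ((i+sP) - 2*z)/(i-sP) := by
    intro z
    simp only [hL, Polynomial.eval_add, Polynomial.eval_mul, Polynomial.eval_C,
      Polynomial.eval_X, ha, hb]
    ring
  set q : Polynomial ℝ := (Polynomial.Chebyshev.T ℝ (m:ℤ)).comp L with hq
  have hqeval : ∀ z : ℝ, q.eval z = (Polynomial.Chebyshev.T ℝ (m:ℤ)).eval (L.eval z) := by
    intro z; simp [hq]
  set p : Polynomial ℝ := uPoly m * q with hp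
  have hLs : L.eval sP = 1 := by
    rw [hLform, show i + sP - 2*sP = i - sP by ring, div_self hne]
  have hLw : L.eval (1/(w:ℝ)) = 1 - δ := by
    rw [hLform, div_eq_iff hne, hδ, hi, hsP]
    have h1 : (w:ℝ) ≠ 0 := ne_of_gt hwpos
    have h2 : M ≠ 0 := ne_of_gt hMpos
    have h3 : 2*(w:ℝ) - M ≠ 0 := ne_of_gt hden
    field_simp
    ring
  have hLmem : ∀ z : ℝ, sP ≤ z → z ≤ i → L.eval z ∈ Set.Icc (-1:ℝ) 1 := by
    intro z hz1 hz2
    rw [hLform]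
    constructor
    · rw [le_div_iff₀ hesP]
      linarith
    · rw [div_le_iff₀ hesP]
      linarith
  refine ⟨p, ?_, ?_, ?_, ?_⟩
  · -- degree bound
    have hd1 : p.natDegree ≤ 2*m := by
      refine le_trans (Polynomial.natDegree_mul_le) ?_
      have h1 := uPoly_natDegree_le m
      have h2 : q.natDegree ≤ m := by
        refine le_trans (Polynomial.natDegree_comp_le) ?_
        have h3 : L.natDegree ≤ 1 := by
          refine le_trans (Polynomial.natDegree_add_le _ _) ?_
          simp only [Polynomial.natDegree_C, max_le_iff]
          exact ⟨Nat.zero_le _, le_trans (Polynomial.natDegree_C_mul_le _ _) (by simp)⟩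
        calc (Polynomial.Chebyshev.T ℝ (m:ℤ)).natDegree * L.natDegree
            ≤ m * 1 := Nat.mul_le_mul (chebT_natDegree_le m) h3
          _ = m := by ring
      omega
    obtain ⟨ww, hww3, hww0⟩ : ∃ ww : ℝ, ww^3 = (w:ℝ) ∧ ww = (w:ℝ) ^ ((1:ℝ)/3) := by
      refine ⟨(w:ℝ) ^ ((1:ℝ)/3), ?_, rfl⟩
      rw [← Real.rpow_natCast ((w:ℝ) ^ ((1:ℝ)/3)) 3, ← Real.rpow_mul (by linarith)]
      norm_num
    have hwwpos : 0 ≤ ww := by rw [hww0]; exact Real.rpow_nonneg (by linarith) _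
    have hww1 : 1 ≤ ww := by
      by_contra h
      push_neg at h
      have h2 : ww^3 < 1 := pow_lt_one₀ hwwpos h (by norm_num)
      rw [hww3] at h2
      linarith
    have htww : t ≤ 2*ww := by
      by_contra h
      push_neg at h
      have h2 : (2*ww)^3 < t^3 := by
        apply pow_lt_pow_left₀ h (by linarith)
        norm_num
      rw [ht3] at h2
      have h4 : (2*ww)^3 = 8*ww^3 := by ring
      rw [h4, hww3] at h2
      linarith
    have hcast : (p.natDegree : ℝ) ≤ 2*M := by
      have h5 : ((p.natDegree : ℕ) : ℝ) ≤ ((2*m : ℕ) : ℝ) := by exact_mod_cast hd1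
      push_cast at h5
      rw [← hM] at h5
      linarith
    rw [← hww0]
    calc (p.natDegree : ℝ) ≤ 2*M := hcast
      _ ≤ 2*(t+1) := by linarith
      _ ≤ 7*ww := by linarith
  · -- boundedness
    intro k hk1 hk2
    rcases le_or_gt k m with h | h
    · have h0 : (uPoly m).eval (1/(k:ℝ)) = 0 := uPoly_eval_root m k hk1 h
      rw [hp]
      simp only [Polynomial.eval_mul, h0, zero_mul, abs_zero]
      norm_num
    · have hkR : (0:ℝ) < (k:ℝ) := by exact_mod_cast (by omega : 0 < k)
      have hkM : M ≤ (k:ℝ) := by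
        rw [hM]; exact_mod_cast (by omega : m ≤ k)
      have hk2w : (k:ℝ) ≤ 2*(w:ℝ) := by exact_mod_cast hk2
      have hz1 : sP ≤ 1/(k:ℝ) := by
        rw [hsP, div_le_div_iff₀ (by positivity) hkR]
        linarith
      have hz2 : 1/(k:ℝ) ≤ i := by
        rw [hi, div_le_div_iff₀ hkR hMpos]
        linarith
      have hu := uPoly_eval_mem m (1/(k:ℝ)) (by positivity) (by
        rw [← hM, mul_one_div, div_le_one hkR]
        exact hkM)
      have hqb : |q.eval (1/(k:ℝ))| ≤ 1 := by
        rw [hqeval]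
        exact chebT_abs_le _ _ (hLmem _ hz1 hz2)
      rw [hp]
      simp only [Polynomial.eval_mul, abs_mul]
      have hub : |(uPoly m).eval (1/(k:ℝ))| ≤ 1 := by
        rw [abs_of_nonneg hu.1]; exact hu.2
      calc |(uPoly m).eval (1/(k:ℝ))| * |q.eval (1/(k:ℝ))|
          ≤ 1 * 1 := mul_le_mul hub hqb (abs_nonneg _) (by norm_num)
        _ = 1 := by norm_num
  · -- value at 1/w
    have hmw : M ≤ (w:ℝ) := by linarith
    have hu := uPoly_eval_mem m (1/(w:ℝ)) (by positivity) (by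
      rw [← hM, mul_one_div, div_le_one hwpos]; exact hmw)
    have hq0 : q.eval (1/(w:ℝ)) ≤ 0 := by
      rw [hqeval, hLw, ← hθcos, Polynomial.Chebyshev.T_real_cos]
      have hcastm : ((m:ℤ):ℝ) = M := by rw [hM]; push_cast; rfl
      rw [hcastm]
      exact hcosm
    rw [hp]
    simp only [Polynomial.eval_mul]
    have h := mul_nonneg hu.1 (neg_nonneg.mpr hq0)
    linarith only [h]
  · -- value at 1/(2w)
    have hq1 : q.eval sP = 1 := by
      rw [hqeval, hLs]
      exact chebT_eval_one _
    have hMsP : M * sP ≤ 1 := by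
      rw [hsP, mul_one_div, div_le_one (by positivity)]
      linarith
    have hMsPnn : 0 ≤ M * sP := mul_nonneg hMpos.le hsPpos.le
    have hustep : 2/3 ≤ (uPoly m).eval sP := by
      rw [uPoly_eval]
      have hprodge : (1 - M*sP)^m ≤ ∏ k ∈ Finset.Icc 1 m, (1 - (k:ℝ)*sP) := by
        have h := Finset.prod_le_prod (s := Finset.Icc 1 m)
          (f := fun _ : ℕ => 1 - M*sP) (g := fun k : ℕ => 1 - (k:ℝ)*sP)
          (fun k _ => by show (0:ℝ) ≤ 1 - M*sP; linarith)
          (by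
            intro k hk
            have hk' := (Finset.mem_Icc.mp hk).2
            have hkM : (k:ℝ) ≤ M := by rw [hM]; exact_mod_cast hk'
            have := mul_le_mul_of_nonneg_right hkM hsPpos.le
            show (1:ℝ) - M*sP ≤ 1 - (k:ℝ)*sP
            linarith)
        rwa [Finset.prod_const, Nat.card_Icc, Nat.add_sub_cancel] at h
      have hbern : 1 - M^2*sP ≤ (1 - M*sP)^m := by
        have hB := one_add_mul_le_pow (a := -(M*sP)) (by linarith) m
        have hMm : ((m:ℕ):ℝ) = M := hM.symm
        calc 1 - M^2*sP = 1 + M * (-(M*sP)) := by ring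
          _ = 1 + (m:ℝ) * (-(M*sP)) := by rw [hMm]
          _ ≤ (1 + -(M*sP))^m := hB
          _ = (1 - M*sP)^m := by ring_nf
      have hMsq : M^2*sP ≤ 1/3 := by
        rw [hsP, mul_one_div, div_le_div_iff₀ (by positivity) (by norm_num)]
        have h170M : 170*M^2 ≤ M^3 := by
          have h := mul_nonneg (sub_nonneg.mpr hM170) (sq_nonneg M)
          linarith only [h]
        linarith only [h170M, hM2, hwR]
      linarith
    rw [hp]
    simp only [Polynomial.eval_mul]
    rw [show 1/(2*(w:ℝ)) = sP from hsP.symm, hq1, mul_one]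
    exact hustep


/-- Tightness of fedja's lemma. -/
theorem fedja_tight : ∃ C : ℝ, 0 < C ∧ ∀ w : ℕ, 0 < w → ∃ p : Polynomial ℝ,
    (p.natDegree : ℝ) ≤ C * (w : ℝ) ^ ((1 : ℝ) / 3) ∧
    (∀ k : ℕ, 1 ≤ k → k ≤ 2 * w → |p.eval (1 / (k : ℝ))| ≤ 1) ∧
    p.eval (1 / (w : ℝ)) ≤ 1 / 3 ∧
    2 / 3 ≤ p.eval (1 / (2 * w : ℝ)) := by
  refine ⟨2*10^6, by norm_num, ?_⟩
  intro w hw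
  have hw1R : (1:ℝ) ≤ (w:ℝ) := by exact_mod_cast hw
  have hww1 : (1:ℝ) ≤ (w:ℝ)^((1:ℝ)/3) := by
    have h := Real.rpow_le_rpow (by norm_num : (0:ℝ) ≤ 1) hw1R (by norm_num : (0:ℝ) ≤ 1/3)
    rwa [Real.one_rpow] at h
  by_cases hcase : 10^6 ≤ w
  · obtain ⟨p, h1, h2, h3, h4⟩ := large_case w hcase
    refine ⟨p, ?_, h2, h3, h4⟩
    have h5 : 7*(w:ℝ)^((1:ℝ)/3) ≤ 2*10^6*(w:ℝ)^((1:ℝ)/3) := by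
      apply mul_le_mul_of_nonneg_right (by norm_num) (by linarith)
    linarith
  · push_neg at hcase
    obtain ⟨p, h1, h2, h3, h4⟩ := small_case w hw
    refine ⟨p, ?_, h2, h3, h4⟩
    have h5 : ((p.natDegree : ℕ) : ℝ) ≤ ((2*w : ℕ) : ℝ) := by exact_mod_cast h1
    push_cast at h5
    have h6 : (w:ℝ) < 10^6 := by exact_mod_cast hcase
    have h7 : (2:ℝ)*(w:ℝ) ≤ 2*10^6 := by linarith
    nlinarith [hww1, h5, h7]
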